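/- arXiv:1711.05841 — 3 statements merged into one kernel-verified Lean document; each statement's English description precedes it below -/
import Mathlib

section
/- Let p : [-1,1] → ℝ be continuous. If for all s, t ∈ [-1,1] we have p(s) + p(t) ≥ p((s-t)/2) + p((t-s)/2), then p is even and convex. -/
open Set

private lemma min_principle' {g : ℝ → ℝ} (hgc : ContinuousOn g (Icc (0:ℝ) 1))
    (hgmid : ∀ s ∈ Icc (0:ℝ) 1, ∀ t ∈ Icc (0:ℝ) 1, (g s + g t)/2 ≤ g ((s+t)/2))
    (hg0 : g 0 = 0) (hg1 : g 1 = 0) : ∀ t ∈ Icc (0:ℝ) 1, 0 ≤ g t := by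
  by_contra hcon
  push_neg at hcon
  obtain ⟨t', ht', hgt'⟩ := hcon
  obtain ⟨t0, ht0, hmin⟩ := (isCompact_Icc (a := (0:ℝ)) (b := 1)).exists_isMinOn
    (nonempty_Icc.2 zero_le_one) hgc
  have hm : g t0 < 0 := lt_of_le_of_lt (hmin ht') hgt'
  have hSclosed : IsClosed (Icc (0:ℝ) 1 ∩ g ⁻¹' {g t0}) :=
    hgc.preimage_isClosed_of_isClosed isClosed_Icc isClosed_singleton
  have hSne : (Icc (0:ℝ) 1 ∩ g ⁻¹' {g t0}).Nonempty := ⟨t0, ht0, rfl⟩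
  have hSbdd : BddBelow (Icc (0:ℝ) 1 ∩ g ⁻¹' {g t0}) := ⟨0, fun t ht => ht.1.1⟩
  obtain ⟨ht1I, ht1g⟩ := hSclosed.csInf_mem hSne hSbdd
  set t1 := sInf (Icc (0:ℝ) 1 ∩ g ⁻¹' {g t0}) with ht1def
  have ht1g' : g t1 = g t0 := ht1g
  have ht1ne0 : t1 ≠ 0 := by intro h0; rw [h0, hg0] at ht1g'; linarith
  have ht1ne1 : t1 ≠ 1 := by intro h0; rw [h0, hg1] at ht1g'; linarith
  have ht1pos : 0 < t1 := lt_of_le_of_ne ht1I.1 (Ne.symm ht1ne0)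
  have ht1lt1 : t1 < 1 := lt_of_le_of_ne ht1I.2 ht1ne1
  obtain ⟨δ, hδpos, hδ1, hδ2⟩ : ∃ δ : ℝ, 0 < δ ∧ δ ≤ t1 ∧ δ ≤ 1 - t1 :=
    ⟨min t1 (1 - t1), lt_min ht1pos (by linarith), min_le_left _ _, min_le_right _ _⟩
  have hu : t1 - δ ∈ Icc (0:ℝ) 1 := ⟨by linarith, by linarith⟩
  have hv : t1 + δ ∈ Icc (0:ℝ) 1 := ⟨by linarith, by linarith⟩
  have hmidg := hgmid _ hu _ hv
  have h2 : ((t1 - δ) + (t1 + δ))/2 = t1 := by ring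
  rw [h2, ht1g'] at hmidg
  have hgu : g t0 ≤ g (t1 - δ) := hmin hu
  have hgv : g t0 ≤ g (t1 + δ) := hmin hv
  have hgu' : g (t1 - δ) = g t0 := by linarith
  have : t1 ≤ t1 - δ := csInf_le hSbdd ⟨hu, hgu'⟩
  linarith

private lemma aux_convexOn' {f : ℝ → ℝ} (hf : ContinuousOn f (Icc (-1:ℝ) 1))
    (hmid : ∀ a ∈ Icc (-1:ℝ) 1, ∀ b ∈ Icc (-1:ℝ) 1, f ((a+b)/2) ≤ (f a + f b)/2) :
    ConvexOn ℝ (Icc (-1:ℝ) 1) f := by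
  refine ⟨convex_Icc _ _, ?_⟩
  intro x hx y hy α β hα hβ hαβ
  have hα' : α = 1 - β := by linarith
  subst hα'
  have hmemt : ∀ t ∈ Icc (0:ℝ) 1, x + t*(y-x) ∈ Icc (-1:ℝ) 1 := by
    intro t ht
    have h1 : x + t*(y-x) = (1-t) * x + t * y := by ring
    rw [h1]
    exact (convex_Icc (-1:ℝ) 1) hx hy (by linarith [ht.2]) ht.1 (by ring)
  have hgc : ContinuousOn (fun t => t * f y + (1-t) * f x - f (x + t*(y-x))) (Icc (0:ℝ) 1) := by
    apply ContinuousOn.sub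
    · fun_prop
    · exact hf.comp (by fun_prop) hmemt
  have hgmid : ∀ s ∈ Icc (0:ℝ) 1, ∀ t ∈ Icc (0:ℝ) 1,
      ((s * f y + (1-s) * f x - f (x + s*(y-x))) + (t * f y + (1-t) * f x - f (x + t*(y-x))))/2 ≤
        (s+t)/2 * f y + (1-(s+t)/2) * f x - f (x + ((s+t)/2)*(y-x)) := by
    intro s hs t ht
    have h1 := hmid _ (hmemt s hs) _ (hmemt t ht)
    have h2 : (x + s*(y-x) + (x + t*(y-x)))/2 = x + ((s+t)/2)*(y-x) := by ring
    rw [h2] at h1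
    linarith
  have key := min_principle' hgc hgmid (by simp) (by simp) β ⟨hβ, by linarith⟩
  have hxy : x + β*(y-x) = (1-β) • x + β • y := by
    simp only [smul_eq_mul]; ring
  rw [hxy] at key
  simp only [smul_eq_mul] at key ⊢
  linarith

private lemma tele_aux' (q e : ℝ → ℝ) (x : ℝ) (hx : x ∈ Set.Icc (-1:ℝ) 1)
    (key : ∀ a ∈ Set.Icc (-1:ℝ) 1, ∀ b ∈ Set.Icc (-1:ℝ) 1,
      |q a - q b| ≤ e a + e b - 2 * e ((a+b)/2)) (n : ℕ) :
    |q (((n:ℝ)+1) * x / ((n:ℝ)+2)) + q x - q 0 - q (x / ((n:ℝ)+2))| ≤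
      e x - e (((n:ℝ)+1) * x / ((n:ℝ)+2)) - e (x / ((n:ℝ)+2)) + e 0 := by
  set N : ℕ := n + 2 with hN
  have hNR : ((N:ℕ):ℝ) = (n:ℝ) + 2 := by push_cast [hN]; ring
  have hNpos : (0:ℝ) < (n:ℝ) + 2 := by positivity
  set y : ℕ → ℝ := fun i => (i:ℝ) * x / ((n:ℝ)+2) with hy
  have ymem : ∀ i : ℕ, i ≤ N → y i ∈ Set.Icc (-1:ℝ) 1 := by
    intro i hi
    have h0 : (0:ℝ) ≤ (i:ℝ) / ((n:ℝ)+2) := by positivity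
    have h1 : (i:ℝ) / ((n:ℝ)+2) ≤ 1 := by
      rw [div_le_one hNpos]
      have : (i:ℝ) ≤ (N:ℝ) := by exact_mod_cast hi
      linarith [hNR]
    have hyi : y i = ((i:ℝ)/((n:ℝ)+2)) * x := by simp only [hy]; ring
    constructor
    · rw [hyi]; nlinarith [hx.1, hx.2]
    · rw [hyi]; nlinarith [hx.1, hx.2]
  have ymid : ∀ i : ℕ, (y (i+2) + y i)/2 = y (i+1) := by
    intro i; simp only [hy]; push_cast; ring
  have step : ∀ i ∈ Finset.range (N - 1),
      |(q (y (i+1)) + q (y (i+2))) - (q (y i) + q (y (i+1)))| ≤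
        (e (y (i+2)) - e (y (i+1))) - (e (y (i+1)) - e (y i)) := by
    intro i hi
    have hi' : i < N - 1 := Finset.mem_range.1 hi
    have h2 : i + 2 ≤ N := by omega
    have hk := key (y (i+2)) (ymem _ h2) (y i) (ymem _ (by omega))
    rw [ymid i] at hk
    have heq : (q (y (i+1)) + q (y (i+2))) - (q (y i) + q (y (i+1))) = q (y (i+2)) - q (y i) := by
      ring
    rw [heq]
    linarith
  have t1 : (q (y (N-1)) + q (y N)) - (q (y 0) + q (y 1)) =
      ∑ i ∈ Finset.range (N-1), ((q (y (i+1)) + q (y (i+2))) - (q (y i) + q (y (i+1)))) := by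
    rw [Finset.sum_range_sub (fun i => q (y i) + q (y (i+1))) (N-1)]
    have : N - 1 + 1 = N := by omega
    rw [this]
  have t2 : ∑ i ∈ Finset.range (N-1), ((e (y (i+2)) - e (y (i+1))) - (e (y (i+1)) - e (y i))) =
      (e (y N) - e (y (N-1))) - (e (y 1) - e (y 0)) := by
    rw [Finset.sum_range_sub (fun i => e (y (i+1)) - e (y i)) (N-1)]
    have : N - 1 + 1 = N := by omega
    rw [this]
  have main : |(q (y (N-1)) + q (y N)) - (q (y 0) + q (y 1))| ≤
      (e (y N) - e (y (N-1))) - (e (y 1) - e (y 0)) := by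
    rw [t1, ← t2]
    exact (Finset.abs_sum_le_sum_abs _ _).trans (Finset.sum_le_sum step)
  have hyN : y N = x := by
    simp only [hy, hNR]
    field_simp
  have hy0 : y 0 = 0 := by simp [hy]
  have hy1 : y 1 = x / ((n:ℝ)+2) := by simp only [hy]; push_cast; ring
  have hyN1 : y (N-1) = ((n:ℝ)+1) * x / ((n:ℝ)+2) := by
    have : N - 1 = n + 1 := by omega
    rw [this]; simp only [hy]; push_cast; ring
  rw [hyN, hy0, hy1, hyN1] at main
  calc |q (((n:ℝ)+1) * x / ((n:ℝ)+2)) + q x - q 0 - q (x / ((n:ℝ)+2))|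
      = |(q (((n:ℝ)+1) * x / ((n:ℝ)+2)) + q x) - (q 0 + q (x / ((n:ℝ)+2)))| := by ring_nf
    _ ≤ e x - e (((n:ℝ)+1) * x / ((n:ℝ)+2)) - e (x / ((n:ℝ)+2)) + e 0 := by linarith [main]

theorem stmt_0 (p : ℝ → ℝ) (hp : ContinuousOn p (Icc (-1) 1))
    (h : ∀ s ∈ Icc (-1:ℝ) 1, ∀ t ∈ Icc (-1:ℝ) 1,
      p s + p t ≥ p ((s - t) / 2) + p ((t - s) / 2)) :
    (∀ x ∈ Icc (-1:ℝ) 1, p (-x) = p x) ∧ ConvexOn ℝ (Icc (-1) 1) p := by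
  have hneg : ∀ a : ℝ, a ∈ Icc (-1:ℝ) 1 → -a ∈ Icc (-1:ℝ) 1 := by
    intro a ha; exact ⟨by linarith [ha.2], by linarith [ha.1]⟩
  -- even and odd parts
  have hpneg : ContinuousOn (fun a => p (-a)) (Icc (-1:ℝ) 1) :=
    hp.comp continuous_neg.continuousOn hneg
  have hq : ContinuousOn (fun a => (p a - p (-a))/2) (Icc (-1:ℝ) 1) :=
    (hp.sub hpneg).div_const 2
  have he : ContinuousOn (fun a => (p a + p (-a))/2) (Icc (-1:ℝ) 1) :=
    (hp.add hpneg).div_const 2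
  have key : ∀ a ∈ Icc (-1:ℝ) 1, ∀ b ∈ Icc (-1:ℝ) 1,
      |(fun a => (p a - p (-a))/2) a - (fun a => (p a - p (-a))/2) b| ≤
        (fun a => (p a + p (-a))/2) a + (fun a => (p a + p (-a))/2) b -
          2 * (fun a => (p a + p (-a))/2) ((a+b)/2) := by
    intro a ha b hb
    have H1 := h b hb (-a) (hneg a ha)
    have H2 := h a ha (-b) (hneg b hb)
    have e1 : (b - -a)/2 = (a+b)/2 := by ring
    have e2 : (-a - b)/2 = -((a+b)/2) := by ring
    have e3 : (a - -b)/2 = (a+b)/2 := by ring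
    have e4 : (-b - a)/2 = -((a+b)/2) := by ring
    rw [e1, e2] at H1
    rw [e3, e4] at H2
    simp only
    rw [abs_le]
    constructor <;> [linarith; linarith]
  -- evenness
  have heven : ∀ x ∈ Icc (-1:ℝ) 1, p (-x) = p x := by
    intro x hx
    set q : ℝ → ℝ := fun a => (p a - p (-a))/2 with hqdef
    set e : ℝ → ℝ := fun a => (p a + p (-a))/2 with hedef
    have h0mem : (0:ℝ) ∈ Icc (-1:ℝ) 1 := ⟨by norm_num, by norm_num⟩
    -- sequences
    have hvmem : ∀ n : ℕ, x / ((n:ℝ)+2) ∈ Icc (-1:ℝ) 1 := by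
      intro n
      have h2 : (0:ℝ) < (n:ℝ) + 2 := by positivity
      constructor
      · rw [le_div_iff₀ h2]; nlinarith [hx.1, hx.2]
      · rw [div_le_iff₀ h2]; nlinarith [hx.1, hx.2]
    have humem : ∀ n : ℕ, ((n:ℝ)+1) * x / ((n:ℝ)+2) ∈ Icc (-1:ℝ) 1 := by
      intro n
      have h2 : (0:ℝ) < (n:ℝ) + 2 := by positivity
      have h3 : (0:ℝ) ≤ (n:ℝ) + 1 := by positivity
      constructor
      · rw [le_div_iff₀ h2]; nlinarith [hx.1, hx.2]
      · rw [div_le_iff₀ h2]; nlinarith [hx.1, hx.2]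
    have hvlim : Filter.Tendsto (fun n : ℕ => x / ((n:ℝ)+2)) Filter.atTop (nhds 0) := by
      have := Filter.Tendsto.div_atTop (tendsto_const_nhds (x := x))
        (Filter.tendsto_atTop_add_const_right _ 2 tendsto_natCast_atTop_atTop)
      exact this
    have hulim : Filter.Tendsto (fun n : ℕ => ((n:ℝ)+1) * x / ((n:ℝ)+2)) Filter.atTop (nhds x) := by
      have heq : ∀ n : ℕ, ((n:ℝ)+1) * x / ((n:ℝ)+2) = x - x / ((n:ℝ)+2) := by
        intro n
        have h2 : ((n:ℝ) + 2) ≠ 0 := by positivity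
        field_simp
        ring
      simp only [heq]
      have := (tendsto_const_nhds (x := x)).sub hvlim
      simpa using this
    -- limits of q, e along sequences
    have hqlim : ∀ z ∈ Icc (-1:ℝ) 1, ∀ (w : ℕ → ℝ), (∀ n, w n ∈ Icc (-1:ℝ) 1) →
        Filter.Tendsto w Filter.atTop (nhds z) →
        Filter.Tendsto (fun n => q (w n)) Filter.atTop (nhds (q z)) := by
      intro z hz w hwmem hwlim
      exact ((hq.continuousWithinAt hz)).tendsto.comp
        (tendsto_nhdsWithin_of_tendsto_nhds_of_eventually_within w hwlim
          (Filter.Eventually.of_forall hwmem))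
    have helim : ∀ z ∈ Icc (-1:ℝ) 1, ∀ (w : ℕ → ℝ), (∀ n, w n ∈ Icc (-1:ℝ) 1) →
        Filter.Tendsto w Filter.atTop (nhds z) →
        Filter.Tendsto (fun n => e (w n)) Filter.atTop (nhds (e z)) := by
      intro z hz w hwmem hwlim
      exact ((he.continuousWithinAt hz)).tendsto.comp
        (tendsto_nhdsWithin_of_tendsto_nhds_of_eventually_within w hwlim
          (Filter.Eventually.of_forall hwmem))
    have LHSlim : Filter.Tendsto
        (fun n : ℕ => |q (((n:ℝ)+1) * x / ((n:ℝ)+2)) + q x - q 0 - q (x / ((n:ℝ)+2))|)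
        Filter.atTop (nhds (|q x + q x - q 0 - q 0|)) := by
      apply Filter.Tendsto.abs
      exact (((hqlim x hx _ humem hulim).add tendsto_const_nhds).sub
        tendsto_const_nhds).sub (hqlim 0 h0mem _ hvmem hvlim)
    have RHSlim : Filter.Tendsto
        (fun n : ℕ => e x - e (((n:ℝ)+1) * x / ((n:ℝ)+2)) - e (x / ((n:ℝ)+2)) + e 0)
        Filter.atTop (nhds (e x - e x - e 0 + e 0)) := by
      exact ((tendsto_const_nhds.sub (helim x hx _ humem hulim)).sub
        (helim 0 h0mem _ hvmem hvlim)).add tendsto_const_nhds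
    have hineq : ∀ n : ℕ,
        |q (((n:ℝ)+1) * x / ((n:ℝ)+2)) + q x - q 0 - q (x / ((n:ℝ)+2))| ≤
          e x - e (((n:ℝ)+1) * x / ((n:ℝ)+2)) - e (x / ((n:ℝ)+2)) + e 0 :=
      tele_aux' q e x hx key
    have final : |q x + q x - q 0 - q 0| ≤ e x - e x - e 0 + e 0 :=
      le_of_tendsto_of_tendsto' LHSlim RHSlim hineq
    have hq0 : q 0 = 0 := by simp [hqdef]
    rw [hq0] at final
    have habs : |2 * q x| ≤ 0 := by
      calc |2 * q x| = |q x + q x - 0 - 0| := by ring_nf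
        _ ≤ e x - e x - e 0 + e 0 := final
        _ = 0 := by ring
    have hqx : q x = 0 := by
      have h2 : |2 * q x| = 0 := le_antisymm habs (abs_nonneg _)
      have h3 := abs_eq_zero.1 h2
      linarith
    simp only [hqdef] at hqx
    linarith
  refine ⟨heven, aux_convexOn' hp ?_⟩
  intro a ha b hb
  have H := h a ha (-b) (hneg b hb)
  have e3 : (a - -b)/2 = (a+b)/2 := by ring
  have e4 : (-b - a)/2 = -((a+b)/2) := by ring
  rw [e3, e4] at H
  have hm : (a+b)/2 ∈ Icc (-1:ℝ) 1 := ⟨by linarith [ha.1, hb.1], by linarith [ha.2, hb.2]⟩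
  have h1 := heven ((a+b)/2) hm
  have h2 := heven b hb
  linarith
end

section
/- Let q ≥ 0, w > 0 and set A(w,q) = [ q(4w - (w+3)ln(w+1)) - ((w-1)/w)ln(w+1) + 4w/ln(w+1) - 4 ] / (2(qw+1)) · q/(q+1). Then for all w > 0 and all q ≥ 0, A(w,q) ≤ 0.63. -/
open Real Set

/-- Padé [3/3] lower bound for `log (1 + x)` on `x ≥ 0`. -/
lemma pade_log {x : ℝ} (hx : 0 ≤ x) :
    (60*x + 60*x^2 + 11*x^3) / (60 + 90*x + 36*x^2 + 3*x^3) ≤ Real.log (1 + x) := by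
  set f : ℝ → ℝ := fun x => Real.log (1 + x) - (60*x + 60*x^2 + 11*x^3) / (60 + 90*x + 36*x^2 + 3*x^3) with hf
  have hQ : ∀ y : ℝ, 0 ≤ y → (0:ℝ) < 60 + 90*y + 36*y^2 + 3*y^3 := by
    intro y hy; positivity
  have hd : ∀ y : ℝ, 0 < y →
      HasDerivAt f (9*y^6 / ((1+y) * (60 + 90*y + 36*y^2 + 3*y^3)^2)) y := by
    intro y hy
    have h1 : HasDerivAt (fun z : ℝ => 1 + z) 1 y := by
      simpa using (hasDerivAt_id y).const_add 1
    have hlog : HasDerivAt (fun z : ℝ => Real.log (1 + z)) (1/(1+y)) y := by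
      simpa using h1.log (by linarith)
    have hx1 : HasDerivAt (fun z : ℝ => z) 1 y := hasDerivAt_id y
    have hx2 : HasDerivAt (fun z : ℝ => z^2) (2*y) y := by simpa using hasDerivAt_pow 2 y
    have hx3 : HasDerivAt (fun z : ℝ => z^3) (3*y^2) y := by simpa using hasDerivAt_pow 3 y
    have hN : HasDerivAt (fun z : ℝ => 60*z + 60*z^2 + 11*z^3) (60 + 120*y + 33*y^2) y := by
      have := ((hx1.const_mul 60).add (hx2.const_mul 60)).add (hx3.const_mul 11)
      exact this.congr_deriv (by ring)
    have hQ' : HasDerivAt (fun z : ℝ => 60 + 90*z + 36*z^2 + 3*z^3) (90 + 72*y + 9*y^2) y := by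
      have := (((hx1.const_mul 90).const_add 60).add (hx2.const_mul 36)).add (hx3.const_mul 3)
      exact this.congr_deriv (by ring)
    have hQne : (60 + 90*y + 36*y^2 + 3*y^3 : ℝ) ≠ 0 := ne_of_gt (hQ y hy.le)
    have hdiv := hN.div hQ' hQne
    have := hlog.sub hdiv
    refine this.congr_deriv ?_
    have h1y : (1 + y : ℝ) ≠ 0 := by positivity
    field_simp
    ring
  have hmono : MonotoneOn f (Ici 0) := by
    apply monotoneOn_of_deriv_nonneg (convex_Ici 0)
    · apply ContinuousOn.sub
      · apply ContinuousOn.log (by fun_prop)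
        intro y hy; simp only [mem_Ici] at hy
        exact ne_of_gt (by linarith)
      · apply ContinuousOn.div (by fun_prop) (by fun_prop)
        intro y hy; simp only [mem_Ici] at hy; exact ne_of_gt (hQ y hy)
    · intro y hy
      rw [interior_Ici] at hy
      exact ((hd y hy).differentiableAt).differentiableWithinAt
    · intro y hy
      rw [interior_Ici] at hy
      rw [(hd y hy).deriv]
      have := hQ y hy.le
      have hy' : (0:ℝ) < y := hy
      have h1y : (0:ℝ) < 1 + y := by linarith
      positivity
  have h0 : f 0 = 0 := by simp [hf]
  have := hmono self_mem_Ici (mem_Ici.2 hx) hx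
  rw [h0] at this
  simpa [hf, sub_nonneg] using this

lemma claim1 {w : ℝ} (hw : 0 < w) : 2.74 * w ≤ (w + 3) * Real.log (w + 1) := by
  have hp := pade_log hw.le
  rw [add_comm 1 w] at hp
  have hQ : (0:ℝ) < 60 + 90*w + 36*w^2 + 3*w^3 := by positivity
  have h1 : (w + 3) * ((60*w + 60*w^2 + 11*w^3) / (60 + 90*w + 36*w^2 + 3*w^3)) ≤
      (w + 3) * Real.log (w + 1) :=
    mul_le_mul_of_nonneg_left hp (by linarith)
  refine le_trans ?_ h1
  rw [← mul_div_assoc, le_div_iff₀ hQ]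
  nlinarith [mul_nonneg hw.le (sq_nonneg (w - 9/5)), sq_nonneg (w - 179/100)]

lemma claim2 {w : ℝ} (hw : 0 < w) :
    0 ≤ 126*(w+1)*w*Real.log (w+1) + 100*(w-1)*(Real.log (w+1))^2
        - 400*w^2 + 400*w*Real.log (w+1) := by
  have hL : 0 < Real.log (w + 1) := Real.log_pos (by linarith)
  set L := Real.log (w + 1) with hLdef
  have hp : (60*w + 60*w^2 + 11*w^3) / (60 + 90*w + 36*w^2 + 3*w^3) ≤ L := by
    have := pade_log hw.le; rwa [add_comm 1 w] at this
  have hQ : (0:ℝ) < 60 + 90*w + 36*w^2 + 3*w^3 := by positivity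
  set P := (60*w + 60*w^2 + 11*w^3) / (60 + 90*w + 36*w^2 + 3*w^3) with hPdef
  have hPnn : 0 ≤ P := by rw [hPdef]; positivity
  rcases le_or_gt 1 w with h1 | h1
  · -- w ≥ 1 : replace L by P everywhere
    have key : 400*w^2 ≤ (126*w^2 + 526*w)*P + 100*(w-1)*P^2 := by
      have e : (126*w^2 + 526*w)*P + 100*(w-1)*P^2 - 400*w^2
          = (93600*w^2 + 507600*w^3 + 717720*w^4 + 411300*w^5 + 108056*w^6
              + 15634*w^7 + 558*w^8) / (60 + 90*w + 36*w^2 + 3*w^3)^2 := by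
        rw [hPdef]; field_simp; ring
      nlinarith [div_nonneg (by positivity : (0:ℝ) ≤ 93600*w^2 + 507600*w^3 + 717720*w^4
        + 411300*w^5 + 108056*w^6 + 15634*w^7 + 558*w^8)
        (by positivity : (0:ℝ) ≤ (60 + 90*w + 36*w^2 + 3*w^3)^2)]
    nlinarith [mul_nonneg (sub_nonneg.2 hp) (by positivity : (0:ℝ) ≤ 126*w^2 + 526*w),
      mul_nonneg (mul_nonneg (sub_nonneg.2 h1) (sub_nonneg.2 hp)) (by linarith : (0:ℝ) ≤ L + P)]
  · -- w < 1 : use L ≤ w for the negative square term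
    have hLw : L ≤ w := by
      have := Real.log_le_sub_one_of_pos (show (0:ℝ) < w + 1 by linarith)
      simpa using this
    have key : (500 - 100*w)*w^2 ≤ (126*w^2 + 526*w)*P := by
      have e : (126*w^2 + 526*w)*P - (500 - 100*w)*w^2
          = (1560*w^2 + 120*w^3 + 4346*w^4 + 3486*w^5 + 300*w^6)
              / (60 + 90*w + 36*w^2 + 3*w^3) := by
        rw [hPdef]; field_simp; ring
      nlinarith [div_nonneg (by positivity : (0:ℝ) ≤ 1560*w^2 + 120*w^3 + 4346*w^4
        + 3486*w^5 + 300*w^6) hQ.le]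
    nlinarith [mul_nonneg (sub_nonneg.2 hp) (by positivity : (0:ℝ) ≤ 126*w^2 + 526*w),
      mul_nonneg (mul_nonneg (by linarith : (0:ℝ) ≤ 1 - w) (by linarith : (0:ℝ) ≤ w - L))
        (by linarith : (0:ℝ) ≤ w + L)]

theorem stmt_12 (A : ℝ → ℝ → ℝ)
    (hA : ∀ w q : ℝ, A w q =
      (q * (4 * w - (w + 3) * Real.log (w + 1)) - ((w - 1) / w) * Real.log (w + 1)
          + 4 * w / Real.log (w + 1) - 4) / (2 * (q * w + 1)) * (q / (q + 1))) :
    ∀ w > (0:ℝ), ∀ q ≥ (0:ℝ), A w q ≤ 0.63 := by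
  intro w hw q hq
  rw [hA]
  have hL : 0 < Real.log (w + 1) := Real.log_pos (by linarith)
  set L := Real.log (w + 1) with hLdef
  have h1 := claim1 hw
  have h2 := claim2 hw
  rw [← hLdef] at h1 h2
  have hden : (0:ℝ) < 2 * (q * w + 1) := by nlinarith
  have hq1 : (0:ℝ) < q + 1 := by linarith
  rw [div_mul_div_comm, div_le_iff₀ (by positivity)]
  have hwL : (0:ℝ) < w * L := mul_pos hw hL
  rw [← mul_le_mul_iff_of_pos_right hwL]
  have hwne : w ≠ 0 := ne_of_gt hw
  have hLne : L ≠ 0 := ne_of_gt hL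
  have expand : (q * (4 * w - (w + 3) * L) - (w - 1) / w * L + 4 * w / L - 4) * q * (w * L)
      = q^2 * (4*w - (w+3)*L) * w * L - q * (w-1) * L^2 + 4 * q * w^2 - 4 * q * w * L := by
    field_simp
  rw [expand]
  nlinarith [mul_nonneg (mul_nonneg (sq_nonneg q) (sub_nonneg.2 h1)) hL.le,
    mul_nonneg hq h2, mul_pos hw hL, sq_nonneg q]
end

section
/- Let q(x) = p(x) - 1 with p twice differentiable, and w > 0. Then the determinant of the Hessian of K(s,x) = s(1+s⁻²)^{p(x)/2} with respect to (s,x) equals ((1+w)^{q-1}/4)·[ w(wq+1)(q+1)ln(1+w)(q'² ln(1+w) + 2q'') - q'²((1-qw)ln(1+w) - 2w)² ], where w = 1/s² and q, q', q'' are evaluated at x. -/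
open Set

private lemma aux_base {t : ℝ} (ht : t ≠ 0) :
    HasDerivAt (fun u : ℝ => 1 + u⁻¹ ^ 2) (2 * t⁻¹ ^ 1 * -(t ^ 2)⁻¹) t :=
  ((hasDerivAt_inv ht).pow 2).const_add 1

private lemma aux_lemA (c : ℝ) {t : ℝ} (ht : 0 < t) :
    HasDerivAt (fun u : ℝ => u * (1 + u⁻¹ ^ 2) ^ c)
      ((1 + t⁻¹ ^ 2) ^ c - 2 * c * t⁻¹ ^ 2 * (1 + t⁻¹ ^ 2) ^ (c - 1)) t := by
  have ha : (0:ℝ) < 1 + t⁻¹ ^ 2 := by positivity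
  have h2 : HasDerivAt (fun u : ℝ => (1 + u⁻¹ ^ 2) ^ c)
      ((2 * t⁻¹ ^ 1 * -(t ^ 2)⁻¹) * c * (1 + t⁻¹ ^ 2) ^ (c - 1)) t :=
    (aux_base ht.ne').rpow_const (Or.inl ha.ne')
  have h3 := (hasDerivAt_id t).mul h2
  refine h3.congr_deriv ?_
  field_simp
  simp only [id_eq]
  ring

private lemma aux_lemB (c : ℝ) {t : ℝ} (ht : 0 < t) :
    HasDerivAt (fun u : ℝ => (1 + u⁻¹ ^ 2) ^ c - 2 * c * u⁻¹ ^ 2 * (1 + u⁻¹ ^ 2) ^ (c - 1))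
      (2 * c * t⁻¹ ^ 3 * (1 + t⁻¹ ^ 2) ^ (c - 1)
        + 4 * c * (c - 1) * t⁻¹ ^ 5 * (1 + t⁻¹ ^ 2) ^ (c - 2)) t := by
  have ha : (0:ℝ) < 1 + t⁻¹ ^ 2 := by positivity
  have h2 : HasDerivAt (fun u : ℝ => (1 + u⁻¹ ^ 2) ^ c)
      ((2 * t⁻¹ ^ 1 * -(t ^ 2)⁻¹) * c * (1 + t⁻¹ ^ 2) ^ (c - 1)) t :=
    (aux_base ht.ne').rpow_const (Or.inl ha.ne')
  have h3 : HasDerivAt (fun u : ℝ => (1 + u⁻¹ ^ 2) ^ (c - 1))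
      ((2 * t⁻¹ ^ 1 * -(t ^ 2)⁻¹) * (c - 1) * (1 + t⁻¹ ^ 2) ^ (c - 1 - 1)) t :=
    (aux_base ht.ne').rpow_const (Or.inl ha.ne')
  have h4 : HasDerivAt (fun u : ℝ => 2 * c * u⁻¹ ^ 2)
      (2 * c * (2 * t⁻¹ ^ 1 * -(t ^ 2)⁻¹)) t :=
    ((hasDerivAt_inv ht.ne').pow 2).const_mul (2 * c)
  have h5 := h2.sub (h4.mul h3)
  refine h5.congr_deriv ?_
  rw [show c - 1 - 1 = c - 2 by ring]
  field_simp
  ring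

theorem stmt_15 (p : ℝ → ℝ) (hp : ContDiff ℝ 2 p) (hp1 : ∀ x, 1 ≤ p x)
    (K : ℝ → ℝ → ℝ) (hK : ∀ s x, K s x = s * (1 + s⁻¹ ^ 2) ^ (p x / 2))
    (s x : ℝ) (hs : 0 < s) :
    deriv (fun s' => deriv (fun s'' => K s'' x) s') s *
        deriv (fun x' => deriv (fun x'' => K s x'') x') x -
      (deriv (fun x' => deriv (fun s' => K s' x') s) x) ^ 2 =
    ((1 + s⁻¹ ^ 2) ^ (p x - 1 - 1) / 4) *
      (s⁻¹ ^ 2 * (s⁻¹ ^ 2 * (p x - 1) + 1) * (p x - 1 + 1) * Real.log (1 + s⁻¹ ^ 2) *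
          ((deriv p x) ^ 2 * Real.log (1 + s⁻¹ ^ 2) + 2 * deriv (deriv p) x) -
        (deriv p x) ^ 2 *
          ((1 - (p x - 1) * s⁻¹ ^ 2) * Real.log (1 + s⁻¹ ^ 2) - 2 * s⁻¹ ^ 2) ^ 2) := by
  have ha : (0:ℝ) < 1 + s⁻¹ ^ 2 := by positivity
  have hd1 : Differentiable ℝ p := hp.differentiable two_ne_zero
  have hp2 : ContDiff ℝ ((1 : WithTop ℕ∞) + 1) p := by
    exact_mod_cast hp
  have hd2 : Differentiable ℝ (deriv p) :=
    (contDiff_succ_iff_deriv.mp hp2).2.2.differentiable one_ne_zero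
  -- first term: second derivative in s
  have e1 : deriv (fun s' => deriv (fun s'' => K s'' x) s') s
      = 2 * (p x / 2) * s⁻¹ ^ 3 * (1 + s⁻¹ ^ 2) ^ (p x / 2 - 1)
        + 4 * (p x / 2) * (p x / 2 - 1) * s⁻¹ ^ 5 * (1 + s⁻¹ ^ 2) ^ (p x / 2 - 2) := by
    have hev : (fun s' => deriv (fun s'' => K s'' x) s')
        =ᶠ[nhds s] (fun s' => (1 + s'⁻¹ ^ 2) ^ (p x / 2)
            - 2 * (p x / 2) * s'⁻¹ ^ 2 * (1 + s'⁻¹ ^ 2) ^ (p x / 2 - 1)) := by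
      filter_upwards [Ioi_mem_nhds hs] with t ht
      have hft : (fun s'' => K s'' x) = fun u => u * (1 + u⁻¹ ^ 2) ^ (p x / 2) :=
        funext fun u => hK u x
      rw [hft, (aux_lemA (p x / 2) ht).deriv]
    rw [hev.deriv_eq, (aux_lemB (p x / 2) hs).deriv]
  -- inner x-derivative
  have hxin : ∀ y : ℝ, HasDerivAt (fun x'' => K s x'')
      (s * (deriv p y / 2 * ((1 + s⁻¹ ^ 2) ^ (p y / 2) * Real.log (1 + s⁻¹ ^ 2)))) y := by
    intro y
    have hft : (fun x'' => K s x'') = fun y => s * (1 + s⁻¹ ^ 2) ^ (p y / 2) :=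
      funext fun y => hK s y
    rw [hft]
    have hg : HasDerivAt (fun y => p y / 2) (deriv p y / 2) y := (hd1 y).hasDerivAt.div_const 2
    have h := ((hasDerivAt_const y ((1:ℝ) + s⁻¹ ^ 2)).rpow hg ha).const_mul s
    refine h.congr_deriv ?_
    ring
  have e2 : deriv (fun x' => deriv (fun x'' => K s x'') x') x
      = s * (1 + s⁻¹ ^ 2) ^ (p x / 2) * Real.log (1 + s⁻¹ ^ 2) *
          (Real.log (1 + s⁻¹ ^ 2) * (deriv p x) ^ 2 / 4 + deriv (deriv p) x / 2) := by
    have hin : (deriv fun x'' => K s x'')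
        = fun y => s * (deriv p y / 2 * ((1 + s⁻¹ ^ 2) ^ (p y / 2) * Real.log (1 + s⁻¹ ^ 2))) :=
      funext fun y => (hxin y).deriv
    rw [hin]
    have h1 : HasDerivAt (fun y => deriv p y / 2) (deriv (deriv p) x / 2) x :=
      (hd2 x).hasDerivAt.div_const 2
    have hg : HasDerivAt (fun y => p y / 2) (deriv p x / 2) x := (hd1 x).hasDerivAt.div_const 2
    have h2 := (((hasDerivAt_const x ((1:ℝ) + s⁻¹ ^ 2)).rpow hg ha).mul_const
      (Real.log (1 + s⁻¹ ^ 2)))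
    have h3 := (h1.mul h2).const_mul s
    exact h3.deriv.trans (by ring)
  -- mixed derivative
  have e3 : deriv (fun x' => deriv (fun s' => K s' x') s) x
      = deriv p x / 2 * ((1 + s⁻¹ ^ 2) ^ (p x / 2) * Real.log (1 + s⁻¹ ^ 2)
          - 2 * s⁻¹ ^ 2 * (1 + s⁻¹ ^ 2) ^ (p x / 2 - 1) * (1 + p x / 2 * Real.log (1 + s⁻¹ ^ 2))) := by
    have hin : (fun x' => deriv (fun s' => K s' x') s)
        = fun y => (1 + s⁻¹ ^ 2) ^ (p y / 2)
            - 2 * (p y / 2) * s⁻¹ ^ 2 * (1 + s⁻¹ ^ 2) ^ (p y / 2 - 1) := by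
      funext y
      have hft : (fun s' => K s' y) = fun u => u * (1 + u⁻¹ ^ 2) ^ (p y / 2) :=
        funext fun u => hK u y
      rw [hft, (aux_lemA (p y / 2) hs).deriv]
    rw [hin]
    have hg : HasDerivAt (fun y => p y / 2) (deriv p x / 2) x := (hd1 x).hasDerivAt.div_const 2
    have hg' : HasDerivAt (fun y => p y / 2 - 1) (deriv p x / 2) x := hg.sub_const 1
    have t1 := (hasDerivAt_const x ((1:ℝ) + s⁻¹ ^ 2)).rpow hg ha
    have t2 := (hasDerivAt_const x ((1:ℝ) + s⁻¹ ^ 2)).rpow hg' ha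
    have hf : HasDerivAt (fun y => 2 * (p y / 2) * s⁻¹ ^ 2) (2 * (deriv p x / 2) * s⁻¹ ^ 2) x :=
      (hg.const_mul 2).mul_const (s⁻¹ ^ 2)
    have h5 := t1.sub (hf.mul t2)
    exact h5.deriv.trans (by ring)
  rw [e1, e2, e3]
  have hA2 : (1 + s⁻¹ ^ 2 : ℝ) ^ (p x - 1 - 1)
      = (1 + s⁻¹ ^ 2) ^ (p x / 2 - 1) * (1 + s⁻¹ ^ 2) ^ (p x / 2 - 1) := by
    rw [← Real.rpow_add ha]; congr 1; ring
  have hc1 : (1 + s⁻¹ ^ 2 : ℝ) ^ (p x / 2)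
      = (1 + s⁻¹ ^ 2) ^ (p x / 2 - 1) * (1 + s⁻¹ ^ 2) := by
    rw [← Real.rpow_add_one ha.ne']; congr 1; ring
  have hc2 : (1 + s⁻¹ ^ 2 : ℝ) ^ (p x / 2 - 1)
      = (1 + s⁻¹ ^ 2) ^ (p x / 2 - 2) * (1 + s⁻¹ ^ 2) := by
    rw [← Real.rpow_add_one ha.ne']; congr 1; ring
  rw [hA2, hc1, hc2]
  field_simp
  ring
end
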